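/- Let λ be a special type B partition of 2n+1. Let L be the padded column list of λ (padded with zeros to even length). Repeatedly delete from L two equal adjacent entries occupying positions 2t+1 and 2t for some t ≥ 0, until no such pair remains. Then for every maximal sequence of such deletions the number of remaining entries is the same, equal to 2p+2, where p+1 is the number of distinct odd parts of λ. (Thus the column description of the component group A(O) ≅ (ℤ/2ℤ)^p of the corresponding nilpotent orbit O of SO(2n+1,ℂ) agrees with the row description: p is one less than the number of distinct odd row lengths.) -/

import Mathlib

/-- `l` is a partition of `N`: a weakly decreasing list of positive integers with sum `N`. -/
def IsPartitionOf (N : ℕ) (l : List ℕ) : Prop :=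
  l.Pairwise (· ≥ ·) ∧ (∀ x ∈ l, 0 < x) ∧ l.sum = N

/-- the `j`-th column length `c_j(λ) = #{i : λ_i ≥ j}`. -/
def colLen (l : List ℕ) (j : ℕ) : ℕ := l.countP (fun x => decide (j ≤ x))

/-- the transpose partition, as the list `c_1 ≥ c_2 ≥ ⋯ ≥ c_{λ_1}` of column lengths. -/
def transposeList (l : List ℕ) : List ℕ :=
  (List.range (l.foldr max 0)).map (fun j => colLen l (j + 1))

/-- pad a list with one zero at the end if necessary so that its length is even. -/
def padToEven (c : List ℕ) : List ℕ := if Even c.length then c else c ++ [0]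

/-- Delete two equal adjacent entries occupying positions `2t+1` and `2t` for some `t ≥ 0`,
where positions in a list of length `m` are numbered `m-1, …, 1, 0` from first to last
(so the later of the two deleted entries has an even number of entries after it). -/
def delStepE (L L' : List ℕ) : Prop :=
  ∃ (a : ℕ) (l₁ l₂ : List ℕ), Even l₂.length ∧ L = l₁ ++ a :: a :: l₂ ∧ L' = l₁ ++ l₂

/-- number of aligned pairs with unequal entries -/
def bad : List ℕ → ℕ
  | a :: b :: t => (if a = b then 0 else 1) + bad t
  | _ => 0

lemma bad_append : ∀ (A B : List ℕ), Even A.length → bad (A ++ B) = bad A + bad B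
  | [], B, _ => by simp [bad]
  | [a], B, h => by simp [Nat.even_iff] at h
  | a :: b :: t, B, h => by
    have ht : Even t.length := by simp [Nat.even_iff] at *; omega
    simp only [List.cons_append, bad]
    have hb := bad_append t B ht
    omega

lemma bad_delStep {L L' : List ℕ} (h : delStepE L L') (hE : Even L.length) :
    bad L' = bad L ∧ Even L'.length := by
  obtain ⟨a, l₁, l₂, h2, rfl, rfl⟩ := h
  have h1 : Even l₁.length := by
    simp [List.length_append, Nat.even_iff] at *; omega
  refine ⟨?_, ?_⟩
  · rw [bad_append l₁ l₂ h1, bad_append l₁ _ h1]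
    simp [bad]
  · simp [List.length_append, Nat.even_iff] at *; omega

lemma terminal_len : ∀ (L : List ℕ), Even L.length → (∀ M, ¬ delStepE L M) →
    L.length = 2 * bad L
  | [], _, _ => by simp [bad]
  | [_], h, _ => by simp [Nat.even_iff] at h
  | a :: b :: t, h, hM => by
    have ht : Even t.length := by simp [Nat.even_iff] at *; omega
    have hab : a ≠ b := by
      rintro rfl
      exact hM t ⟨a, [], t, ht, rfl, rfl⟩
    have htM : ∀ M, ¬ delStepE t M := by
      rintro M ⟨c, l₁, l₂, he, rfl, rfl⟩
      exact hM (a :: b :: (l₁ ++ l₂)) ⟨c, a :: b :: l₁, l₂, he, by simp, by simp⟩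
    have := terminal_len t ht htM
    simp [bad, hab]
    omega

lemma rtg_bad {L M : List ℕ} (h : Relation.ReflTransGen delStepE L M) (hE : Even L.length) :
    bad M = bad L ∧ Even M.length := by
  induction h with
  | refl => exact ⟨rfl, hE⟩
  | tail _ hstep ih =>
      obtain ⟨hb, he⟩ := ih
      obtain ⟨hb', he'⟩ := bad_delStep hstep he
      exact ⟨hb'.trans hb, he'⟩

lemma colLen_succ (l : List ℕ) (j : ℕ) :
    colLen l j = colLen l (j+1) + l.count j := by
  induction l with
  | nil => simp [colLen]
  | cons a t ih =>
      simp only [colLen, List.countP_cons, List.count_cons] at *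
      by_cases h1 : j ≤ a <;> by_cases h3 : j+1 ≤ a <;> by_cases h2 : a = j <;>
        simp [h1, h2, h3, Nat.add_one_le_iff] at ih ⊢ <;> omega

lemma le_foldr_max : ∀ (l : List ℕ), ∀ x ∈ l, x ≤ l.foldr max 0
  | [] => by intro x hx; simp at hx
  | a :: t => by
    intro x hx
    simp only [List.foldr_cons]
    rcases List.mem_cons.mp hx with rfl | h
    · exact le_max_left _ _
    · exact (le_foldr_max t x h).trans (le_max_right _ _)

lemma colLen_max_succ (l : List ℕ) : colLen l (l.foldr max 0 + 1) = 0 := by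
  rw [colLen, List.countP_eq_zero]
  intro x hx
  have := le_foldr_max l x hx
  simp; omega

lemma colLen_ne_iff (l : List ℕ) (j : ℕ) : (colLen l (j+1) = colLen l (j+2)) ↔ j+1 ∉ l := by
  have h : colLen l (j+1) = colLen l (j+2) + l.count (j+1) := colLen_succ l (j+1)
  rw [← List.count_pos_iff (a := j+1) (l := l)]
  omega

lemma bad_range (l : List ℕ) : ∀ k,
    bad ((List.range (2*k)).map (fun j => colLen l (j+1)))
      = (List.range k).countP (fun i => decide ((2*i+1) ∈ l))
  | 0 => by simp [bad]
  | k+1 => by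
    have h2 : 2*(k+1) = (2*k) + 1 + 1 := by ring
    rw [h2, List.range_succ, List.range_succ, List.range_succ]
    simp only [List.map_append, List.append_assoc, List.countP_append]
    rw [bad_append _ _ (by simp)]
    rw [bad_range l k]
    simp only [List.map_cons, List.map_nil, List.singleton_append, bad, List.countP_cons,
      List.countP_nil]
    have hcol : (colLen l (2*k+1) = colLen l (2*k+1+1)) ↔ (2*k+1) ∉ l := colLen_ne_iff l (2*k)
    by_cases hmem : 2*k+1 ∈ l
    · have h1 : ¬ (colLen l (2*k+1) = colLen l (2*k+1+1)) := fun hc => (hcol.mp hc) hmem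
      simp [hmem, h1]
    · simp [hmem, hcol.mpr hmem]

lemma count_eq (l : List ℕ) (k : ℕ) (hk : ∀ x ∈ l, Odd x → x < 2*k) :
    (l.filter (fun x => decide (Odd x))).dedup.length
      = (List.range k).countP (fun i => decide ((2*i+1) ∈ l)) := by
  rw [List.countP_eq_length_filter, ← List.card_toFinset]
  have hnd : ((List.range k).filter (fun i => decide ((2*i+1) ∈ l))).Nodup :=
    List.nodup_range.filter _
  rw [← hnd.dedup, ← List.card_toFinset]
  refine Finset.card_bij' (fun x _ => x / 2) (fun i _ => 2*i+1) ?hi ?hj ?li ?ri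
  case hi =>
    intro x hx
    simp only [List.mem_toFinset, List.mem_filter, decide_eq_true_eq, List.mem_range] at hx ⊢
    obtain ⟨hxl, c, rfl⟩ := hx
    have hlt := hk _ hxl ⟨c, by ring⟩
    have hdiv : (2*c+1)/2 = c := by omega
    rw [hdiv]
    exact ⟨by omega, hxl⟩
  case hj =>
    intro i hi
    simp only [List.mem_toFinset, List.mem_filter, decide_eq_true_eq, List.mem_range] at hi ⊢
    exact ⟨hi.2, ⟨i, by ring⟩⟩
  case li =>
    intro x hx
    simp only [List.mem_toFinset, List.mem_filter, decide_eq_true_eq] at hx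
    obtain ⟨hxl, c, rfl⟩ := hx
    show 2*((2*c+1)/2)+1 = 2*c+1
    omega
  case ri =>
    intro i _
    show (2*i+1)/2 = i
    omega

lemma odd_mem_of_odd_sum : ∀ (l : List ℕ), ¬ Even l.sum → ∃ x ∈ l, Odd x
  | [], h => by simp at h
  | a :: t, h => by
    by_cases ha : Odd a
    · exact ⟨a, List.mem_cons_self, ha⟩
    · have : ¬ Even t.sum := by
        simp only [List.sum_cons] at h
        simp [Nat.even_iff, Nat.odd_iff] at *
        omega
      obtain ⟨x, hx, hox⟩ := odd_mem_of_odd_sum t this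
      exact ⟨x, List.mem_cons_of_mem a hx, hox⟩


/-- Let `l` be a special type B partition of `2n+1`.  Starting from the padded column list
of `l` (padded with zeros to even length), repeatedly delete two equal adjacent entries at
positions `2t+1` and `2t` until no such pair remains.  Then every maximal sequence of such
deletions leaves the same number of entries, namely `2p+2`, where `p+1` is the number of
distinct odd parts of `l`. -/
theorem typeB_componentGroup_columns (n : ℕ) (l : List ℕ)
    (hpart : IsPartitionOf (2 * n + 1) l)
    (hB : ∀ e ∈ l, Even e → Even (l.count e))
    (hspecial : ∀ e ∈ transposeList l, Even e → Even ((transposeList l).count e)) :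
    ∃ p : ℕ, (l.filter (fun x => decide (Odd x))).dedup.length = p + 1 ∧
      ∀ M : List ℕ, Relation.ReflTransGen delStepE (padToEven (transposeList l)) M →
        (∀ M', ¬ delStepE M M') → M.length = 2 * p + 2 := by
  obtain ⟨-, hpos, hsum⟩ := hpart
  set m := l.foldr max 0 with hm
  set k := (m+1)/2 with hkk
  have hle : ∀ x ∈ l, x ≤ m := le_foldr_max l
  have hpad : padToEven (transposeList l) = (List.range (2*k)).map (fun j => colLen l (j+1)) := by
    have hlen : (transposeList l).length = m := by simp [transposeList, hm]
    by_cases hme : Even m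
    · have h2k : 2*k = m := by simp [Nat.even_iff] at hme; omega
      rw [padToEven, if_pos (by rw [hlen]; exact hme), h2k, transposeList, ← hm]
    · have h2k : 2*k = m+1 := by simp [Nat.even_iff] at hme; omega
      rw [padToEven, if_neg (by rw [hlen]; exact hme), h2k, transposeList, ← hm,
        List.range_succ, List.map_append]
      have h0 : colLen l (m+1) = 0 := by rw [hm]; exact colLen_max_succ l
      simp [h0]
  have hk' : ∀ x ∈ l, Odd x → x < 2*k := by
    intro x hx hox
    have := hle x hx
    rw [Nat.odd_iff] at hox
    omega
  have hq : (l.filter (fun x => decide (Odd x))).dedup.length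
      = bad (padToEven (transposeList l)) := by
    rw [hpad, bad_range l k]
    exact count_eq l k hk'
  have hq1 : 1 ≤ (l.filter (fun x => decide (Odd x))).dedup.length := by
    have hodd : ¬ Even l.sum := by rw [hsum]; simp [Nat.even_iff]
    obtain ⟨x, hx, hox⟩ := odd_mem_of_odd_sum l hodd
    have hmem : x ∈ (l.filter (fun x => decide (Odd x))).dedup := by
      rw [List.mem_dedup, List.mem_filter]; exact ⟨hx, by simp [hox]⟩
    exact List.length_pos_of_mem hmem
  refine ⟨(l.filter (fun x => decide (Odd x))).dedup.length - 1, by omega, ?_⟩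
  intro M hM hterm
  have hE : Even (padToEven (transposeList l)).length := by
    rw [padToEven]; split
    · assumption
    · rename_i h; simp [List.length_append, Nat.even_iff] at *; omega
  obtain ⟨hb, he⟩ := rtg_bad hM hE
  have hlen := terminal_len M he hterm
  omega
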